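/- Let C be a nontrivial 1-perfect code in the Johnson scheme J(2w+a, w) with w ≥ 1, a ≥ 0. Then C is k-regular for every positive integer k with k < L(w,a), where L(w,a) = (2w + a + 1 − √((a+1)² + 4(w−1)))/2. -/

import Mathlib

open scoped BigOperators

/-- A code in the Johnson scheme `J(n,w)`: a set of `w`-element subsets of `{1,…,n}`. -/
def IsJohnsonCode (n w : ℕ) (C : Set (Finset (Fin n))) : Prop :=
  ∀ c ∈ C, c.card = w

/-- `C` is a 1-perfect code in `J(n,w)`: every `w`-subset of `{1,…,n}` is within Johnson
distance 1 (Johnson distance between `w`-sets `x`, `y` is `w - |x ∩ y|`) of exactly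
one codeword of `C`. -/
def IsOnePerfect (n w : ℕ) (C : Set (Finset (Fin n))) : Prop :=
  IsJohnsonCode n w C ∧
    ∀ s : Finset (Fin n), s.card = w → ∃! c, c ∈ C ∧ w - (c ∩ s).card ≤ 1

/-- `C` is `k`-regular: (1) the number of codewords meeting a `k`-set `A` in exactly `i`
points depends only on `i`, and (2) for each `k`-set `A`, the number of codewords `c`
with `c ∩ A = I` depends only on `|I|` (for `I ⊆ A`). -/
def IsKRegularCode (n k : ℕ) (C : Set (Finset (Fin n))) : Prop :=
  (∃ α : ℕ → ℕ, ∀ A : Finset (Fin n), A.card = k → ∀ i, i ≤ k →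
      {c ∈ C | (c ∩ A).card = i}.ncard = α i) ∧
  (∀ A : Finset (Fin n), A.card = k → ∃ β : ℕ → ℕ,
      ∀ I : Finset (Fin n), I ⊆ A → {c ∈ C | c ∩ A = I}.ncard = β I.card)

/-- `L(w,a) = (2w + a + 1 - √((a+1)² + 4(w-1))) / 2`, the smaller root of
`m² - (2w+a+1)m + w(w+a) + 1`. -/
noncomputable def Lwa (w a : ℕ) : ℝ :=
  (2 * (w : ℝ) + a + 1 - Real.sqrt (((a : ℝ) + 1) ^ 2 + 4 * ((w : ℝ) - 1))) / 2

open Finset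

lemma sigma_pos_real (w a : ℕ) (hw : 1 ≤ w) (x : ℝ) (hx : x < Lwa w a) :
    x^2 - (2*(w:ℝ)+a+1)*x + ((w:ℝ)*((w:ℝ)+a)+1) > 0 := by
  have hw' : (1:ℝ) ≤ w := by exact_mod_cast hw
  have hD : (0:ℝ) ≤ ((a : ℝ) + 1) ^ 2 + 4 * ((w : ℝ) - 1) := by nlinarith [sq_nonneg ((a:ℝ)+1)]
  have hs := Real.sq_sqrt hD
  have hsn := Real.sqrt_nonneg (((a : ℝ) + 1) ^ 2 + 4 * ((w : ℝ) - 1))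
  rw [Lwa] at hx
  nlinarith [hs, hsn, hx]

section JohnsonAux

variable {α : Type*} [DecidableEq α] [Fintype α]


variable {α : Type*} [DecidableEq α]

lemma pair_lemma (Cf : Finset (Finset α)) (A I : Finset α) (x : α)
    (hxA : x ∈ A) (hI : I ⊆ A.erase x) :
    #(Cf.filter (fun c => c ∩ A = I)) + #(Cf.filter (fun c => c ∩ A = insert x I))
      = #(Cf.filter (fun c => c ∩ A.erase x = I)) := by
  have hxI : x ∉ I := fun h => (Finset.notMem_erase x A) (hI h)
  have h1 : ∀ c : Finset α, (c ∩ A = I) ↔ (c ∩ A.erase x = I ∧ x ∉ c) := by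
    intro c
    constructor
    · intro h
      have h' : ∀ u, (u ∈ c ∧ u ∈ A) ↔ u ∈ I := by
        intro u; simp only [← mem_inter, h, mem_insert]
      have hxc : x ∉ c := fun hx => hxI ((h' x).mp ⟨hx, hxA⟩)
      refine ⟨?_, hxc⟩
      ext u
      simp only [mem_inter, mem_erase]
      constructor
      · rintro ⟨huc, _, huA⟩; exact (h' u).mp ⟨huc, huA⟩
      · intro hu
        obtain ⟨huc, huA⟩ := (h' u).mpr hu
        exact ⟨huc, fun he => hxc (he ▸ huc), huA⟩
    · rintro ⟨h, hxc⟩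
      have h' : ∀ u, (u ∈ c ∧ (u ≠ x ∧ u ∈ A)) ↔ u ∈ I := by
        intro u; simp only [← mem_inter, ← h, mem_inter, mem_erase]
      ext u
      simp only [mem_inter]
      constructor
      · rintro ⟨huc, huA⟩
        exact (h' u).mp ⟨huc, fun he => hxc (he ▸ huc), huA⟩
      · intro hu
        obtain ⟨huc, _, huA⟩ := (h' u).mpr hu
        exact ⟨huc, huA⟩
  have h2 : ∀ c : Finset α, (c ∩ A = insert x I) ↔ (c ∩ A.erase x = I ∧ x ∈ c) := by
    intro c
    constructor
    · intro h
      have h' : ∀ u, (u ∈ c ∧ u ∈ A) ↔ (u = x ∨ u ∈ I) := by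
        intro u; simp only [← mem_inter, h, mem_insert]
      have hxc : x ∈ c := ((h' x).mpr (Or.inl rfl)).1
      refine ⟨?_, hxc⟩
      ext u
      simp only [mem_inter, mem_erase]
      constructor
      · rintro ⟨huc, hne, huA⟩
        rcases (h' u).mp ⟨huc, huA⟩ with he | hu
        · exact absurd he hne
        · exact hu
      · intro hu
        obtain ⟨huc, huA⟩ := (h' u).mpr (Or.inr hu)
        exact ⟨huc, fun he => hxI (he ▸ hu), huA⟩
    · rintro ⟨h, hxc⟩
      have h' : ∀ u, (u ∈ c ∧ (u ≠ x ∧ u ∈ A)) ↔ u ∈ I := by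
        intro u; simp only [← mem_inter, ← h, mem_inter, mem_erase]
      ext u
      simp only [mem_inter, mem_insert]
      constructor
      · rintro ⟨huc, huA⟩
        by_cases hux : u = x
        · exact Or.inl hux
        · exact Or.inr ((h' u).mp ⟨huc, hux, huA⟩)
      · rintro (he | hu)
        · subst he; exact ⟨hxc, hxA⟩
        · obtain ⟨huc, _, huA⟩ := (h' u).mpr hu
          exact ⟨huc, huA⟩
  have e1 : Cf.filter (fun c => c ∩ A = I)
      = (Cf.filter (fun c => c ∩ A.erase x = I)).filter (fun c => x ∉ c) := by
    rw [filter_filter]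
    exact filter_congr (fun c _ => h1 c)
  have e2 : Cf.filter (fun c => c ∩ A = insert x I)
      = (Cf.filter (fun c => c ∩ A.erase x = I)).filter (fun c => x ∈ c) := by
    rw [filter_filter]
    exact filter_congr (fun c _ => h2 c)
  rw [e1, e2, Nat.add_comm]
  exact card_filter_add_card_filter_not (fun c => x ∈ c)

lemma ies1 {c : Finset α} {y z : α} (hy : y ∈ c) (hz : z ∉ c) :
    insert z (c.erase y) \ c = {z} := by
  ext u
  simp only [mem_sdiff, mem_insert, mem_erase, mem_singleton]
  constructor
  · rintro ⟨(rfl | ⟨_, huc⟩), hnc⟩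
    · rfl
    · exact absurd huc hnc
  · rintro rfl; exact ⟨Or.inl rfl, hz⟩

lemma ies2 {c : Finset α} {y z : α} (hy : y ∈ c) (hz : z ∉ c) :
    c \ insert z (c.erase y) = {y} := by
  ext u
  simp only [mem_sdiff, mem_insert, mem_erase, mem_singleton]
  constructor
  · rintro ⟨huc, hn⟩
    push_neg at hn
    by_contra hne
    exact (hn.2 hne) huc
  · rintro rfl
    refine ⟨hy, ?_⟩
    push_neg
    exact ⟨fun he => absurd (he ▸ hy) hz, fun h _ => absurd rfl h⟩

lemma ies3 {c : Finset α} {y z : α} (hy : y ∈ c) (hz : z ∉ c) :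
    c ∩ insert z (c.erase y) = c.erase y := by
  ext u
  simp only [mem_inter, mem_insert, mem_erase]
  constructor
  · rintro ⟨huc, (rfl | ⟨hne, _⟩)⟩
    · exact absurd huc hz
    · exact ⟨hne, huc⟩
  · rintro ⟨hne, huc⟩
    exact ⟨huc, Or.inr ⟨hne, huc⟩⟩

variable [Fintype α]

lemma ball_ne {w : ℕ} (hw : 1 ≤ w) (A c : Finset α) (hc : #c = w) :
    #(((Aᶜ).powersetCard w).filter (fun s => w - #(c ∩ s) ≤ 1 ∧ s ≠ c))
      = #(c.filter (fun y => c ∩ A ⊆ {y})) * #((c ∪ A)ᶜ) := by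
  rw [← card_product]
  rw [← Finset.card_image_of_injOn (f := fun p : α × α => insert p.2 (c.erase p.1)) ?inj]
  case inj =>
    rintro ⟨y, z⟩ hp ⟨y', z'⟩ hp' heq
    simp only [coe_product, Set.mem_prod, mem_coe, mem_filter, mem_compl, mem_union] at hp hp'
    obtain ⟨⟨hy, _⟩, hzc⟩ := hp
    obtain ⟨⟨hy', _⟩, hzc'⟩ := hp'
    have hz : z ∉ c := fun h => hzc (Or.inl h)
    have hz' : z' ∉ c := fun h => hzc' (Or.inl h)
    simp only at heq
    have e1 : ({z} : Finset α) = {z'} := by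
      rw [← ies1 hy hz, ← ies1 hy' hz', heq]
    have e2 : ({y} : Finset α) = {y'} := by
      rw [← ies2 hy hz, ← ies2 hy' hz', heq]
    have := singleton_injective e1
    have := singleton_injective e2
    simp_all
  congr 1
  ext s
  simp only [mem_filter, mem_powersetCard, mem_image, mem_product, mem_compl, mem_union]
  constructor
  · rintro ⟨⟨hsA, hsw⟩, hcov, hne⟩
    -- extract y, z
    have hile : #(c ∩ s) ≤ w := by
      calc #(c ∩ s) ≤ #c := card_le_card (inter_subset_left)
      _ = w := hc
    have hine : #(c ∩ s) ≠ w := by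
      intro he
      have h1 : c ∩ s = c := eq_of_subset_of_card_le inter_subset_left (by omega)
      have h2 : c ⊆ s := by rw [← h1]; exact inter_subset_right
      exact hne ((eq_of_subset_of_card_le h2 (by omega)).symm)
    have hieq : #(c ∩ s) = w - 1 := by omega
    have hcs : #(c \ s) = 1 := by
      have := card_inter_add_card_sdiff c s
      omega
    have hsc : #(s \ c) = 1 := by
      have := card_inter_add_card_sdiff s c
      rw [inter_comm] at this
      omega
    obtain ⟨y, hyd⟩ := card_eq_one.mp hcs
    obtain ⟨z, hzd⟩ := card_eq_one.mp hsc
    have hy : y ∈ c := (mem_sdiff.mp (hyd ▸ mem_singleton_self y)).1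
    have hyns : y ∉ s := (mem_sdiff.mp (hyd ▸ mem_singleton_self y)).2
    have hzs : z ∈ s := (mem_sdiff.mp (hzd ▸ mem_singleton_self z)).1
    have hznc : z ∉ c := (mem_sdiff.mp (hzd ▸ mem_singleton_self z)).2
    refine ⟨⟨y, z⟩, ⟨⟨⟨hy, ?_⟩, ?_⟩, ?_⟩⟩
    · -- c ∩ A ⊆ {y}
      intro u hu
      obtain ⟨huc, huA⟩ := mem_inter.mp hu
      have huns : u ∉ s := fun hus => (mem_compl.mp (hsA hus)) huA
      have : u ∈ c \ s := mem_sdiff.mpr ⟨huc, huns⟩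
      rwa [hyd] at this
    · -- z ∉ c ∪ A
      rintro (h | h)
      · exact hznc h
      · exact (mem_compl.mp (hsA hzs)) h
    · -- insert z (c.erase y) = s
      ext u
      simp only [mem_insert, mem_erase]
      constructor
      · rintro (rfl | ⟨hne', huc⟩)
        · exact hzs
        · by_contra hus
          have : u ∈ c \ s := mem_sdiff.mpr ⟨huc, hus⟩
          rw [hyd, mem_singleton] at this
          exact hne' this
      · intro hus
        by_cases huc : u ∈ c
        · exact Or.inr ⟨fun he => hyns (he ▸ hus), huc⟩
        · have : u ∈ s \ c := mem_sdiff.mpr ⟨hus, huc⟩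
          rw [hzd, mem_singleton] at this
          exact Or.inl this
  · rintro ⟨⟨y, z⟩, ⟨⟨⟨hy, hsub⟩, hzc⟩, rfl⟩⟩
    have hz : z ∉ c := fun h => hzc (Or.inl h)
    have hzA : z ∉ A := fun h => hzc (Or.inr h)
    have hzne : z ∉ c.erase y := fun h => hz (mem_erase.mp h).2
    have hcard : #(insert z (c.erase y)) = w := by
      rw [card_insert_of_notMem hzne, card_erase_of_mem hy, hc]
      omega
    refine ⟨⟨?_, hcard⟩, ?_, ?_⟩
    · intro u hu
      rw [mem_compl]
      rcases mem_insert.mp hu with rfl | hu'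
      · exact hzA
      · obtain ⟨hne', huc⟩ := mem_erase.mp hu'
        intro huA
        exact hne' (mem_singleton.mp (hsub (mem_inter.mpr ⟨huc, huA⟩)))
    · rw [ies3 hy hz, card_erase_of_mem hy, hc]
      omega
    · intro he
      exact hz (he ▸ mem_insert_self z (c.erase y))

lemma ball_count {w : ℕ} (hw : 1 ≤ w) (A c : Finset α) (hc : #c = w)
    (hne : #(((Aᶜ).powersetCard w).filter (fun s => w - #(c ∩ s) ≤ 1 ∧ s ≠ c))
      = #(c.filter (fun y => c ∩ A ⊆ {y})) * #((c ∪ A)ᶜ)) :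
    #(((Aᶜ).powersetCard w).filter (fun s => w - #(c ∩ s) ≤ 1))
      = (if c ∩ A = ∅ then 1 else 0) + #(c.filter fun y => c ∩ A ⊆ {y}) * #((c ∪ A)ᶜ) := by
  rw [← hne]
  have hsplit := card_filter_add_card_filter_not
    (s := ((Aᶜ).powersetCard w).filter (fun s => w - #(c ∩ s) ≤ 1)) (fun s => s = c)
  rw [filter_filter, filter_filter] at hsplit
  have h1 : (((Aᶜ).powersetCard w).filter (fun s => (w - #(c ∩ s) ≤ 1) ∧ s = c))
      = if c ∩ A = ∅ then {c} else ∅ := by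
    split_ifs with hca
    · ext s
      simp only [mem_filter, mem_powersetCard, mem_singleton]
      constructor
      · rintro ⟨_, _, rfl⟩; rfl
      · intro h
        rw [h]
        refine ⟨⟨?_, hc⟩, by rw [inter_self, hc]; omega, rfl⟩
        intro u hu
        rw [mem_compl]
        intro huA
        have : u ∈ c ∩ A := mem_inter.mpr ⟨hu, huA⟩
        rw [hca] at this
        exact notMem_empty u this
    · ext s
      simp only [mem_filter, mem_powersetCard, notMem_empty, iff_false]
      rintro ⟨⟨hsub, _⟩, _, h⟩
      rw [h] at hsub
      apply hca
      ext u
      simp only [mem_inter, notMem_empty, iff_false]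
      rintro ⟨huc, huA⟩
      exact (mem_compl.mp (hsub huc)) huA
  have h2 : #(((Aᶜ).powersetCard w).filter (fun s => (w - #(c ∩ s) ≤ 1) ∧ s = c))
      = if c ∩ A = ∅ then 1 else 0 := by
    rw [h1]; split_ifs <;> simp
  have hsplit' : #(((Aᶜ).powersetCard w).filter (fun s => (w - #(c ∩ s) ≤ 1) ∧ s = c))
      + #(((Aᶜ).powersetCard w).filter (fun s => (w - #(c ∩ s) ≤ 1) ∧ s ≠ c))
      = #(((Aᶜ).powersetCard w).filter (fun s => w - #(c ∩ s) ≤ 1)) := hsplit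
  omega

lemma filter_card_eq_zero (A c : Finset α) (h : c ∩ A = ∅) :
    #(c.filter fun y => c ∩ A ⊆ {y}) = #c := by
  rw [filter_true_of_mem]
  intro y _
  rw [h]
  exact empty_subset _

lemma filter_card_eq_one (A c : Finset α) (h : #(c ∩ A) = 1) :
    #(c.filter fun y => c ∩ A ⊆ {y}) = 1 := by
  obtain ⟨x, hx⟩ := card_eq_one.mp h
  have hxc : x ∈ c := (mem_inter.mp (hx ▸ mem_singleton_self x)).1
  rw [card_eq_one]
  refine ⟨x, ?_⟩
  ext y
  simp only [mem_filter, hx, mem_singleton, singleton_subset_iff]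
  constructor
  · rintro ⟨_, h'⟩; exact h'.symm
  · rintro rfl; exact ⟨hxc, rfl⟩

lemma filter_card_ge_two (A c : Finset α) (h : 2 ≤ #(c ∩ A)) :
    #(c.filter fun y => c ∩ A ⊆ {y}) = 0 := by
  rw [card_eq_zero]
  ext y
  simp only [mem_filter, notMem_empty, iff_false]
  rintro ⟨_, hsub⟩
  have := card_le_card hsub
  simp at this
  omega
lemma perfect_sum {w : ℕ} (C : Set (Finset α))
    (hC : ∀ s : Finset α, #s = w → ∃! c, c ∈ C ∧ w - #(c ∩ s) ≤ 1)
    (Cf : Finset (Finset α)) (hCf : ∀ c, c ∈ Cf ↔ c ∈ C) (A : Finset α) :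
    #((Aᶜ).powersetCard w)
      = ∑ c ∈ Cf, #(((Aᶜ).powersetCard w).filter (fun s => w - #(c ∩ s) ≤ 1)) := by
  classical
  have hf : ∀ s ∈ (Aᶜ).powersetCard w,
      (if h : #s = w then (hC s h).exists.choose else ∅) ∈ Cf := by
    intro s hs
    have hsw : #s = w := (mem_powersetCard.mp hs).2
    rw [dif_pos hsw, hCf]
    exact (hC s hsw).exists.choose_spec.1
  rw [card_eq_sum_card_fiberwise hf]
  apply Finset.sum_congr rfl
  intro c hcmem
  congr 1
  ext s
  simp only [mem_filter]
  constructor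
  · rintro ⟨hs, heq⟩
    have hsw : #s = w := (mem_powersetCard.mp hs).2
    rw [dif_pos hsw] at heq
    exact ⟨hs, heq ▸ (hC s hsw).exists.choose_spec.2⟩
  · rintro ⟨hs, hcov⟩
    have hsw : #s = w := (mem_powersetCard.mp hs).2
    rw [dif_pos hsw]
    refine ⟨hs, ?_⟩
    exact ((hC s hsw).unique (hC s hsw).exists.choose_spec ⟨(hCf c).mp hcmem, hcov⟩)

lemma master_eq {w k : ℕ} (hw : 1 ≤ w) (hk : k < w) (hn : 2 * w ≤ Fintype.card α)
    (C : Set (Finset α)) (hcard : ∀ c ∈ C, #c = w)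
    (hC : ∀ s : Finset α, #s = w → ∃! c, c ∈ C ∧ w - #(c ∩ s) ≤ 1)
    (Cf : Finset (Finset α)) (hCf : ∀ c, c ∈ Cf ↔ c ∈ C)
    (A : Finset α) (hA : #A = k) :
    (Fintype.card α - k).choose w
      = #(Cf.filter (fun c => c ∩ A = ∅)) * (1 + w * (Fintype.card α - w - k))
        + #(Cf.filter (fun c => #(c ∩ A) = 1)) * (Fintype.card α - w - k + 1) := by
  classical
  set n := Fintype.card α with hndef
  have h0 : (n - k).choose w = #((Aᶜ).powersetCard w) := by
    rw [card_powersetCard, card_compl, hA]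
  rw [h0, perfect_sum C hC Cf hCf A]
  -- per-codeword ball values
  have hball : ∀ c ∈ Cf, #(((Aᶜ).powersetCard w).filter (fun s => w - #(c ∩ s) ≤ 1))
      = (if c ∩ A = ∅ then 1 else 0) + #(c.filter fun y => c ∩ A ⊆ {y}) * #((c ∪ A)ᶜ) := by
    intro c hc
    exact ball_count hw A c (hcard c ((hCf c).mp hc)) (ball_ne hw A c (hcard c ((hCf c).mp hc)))
  rw [← Finset.sum_filter_add_sum_filter_not Cf (fun c => c ∩ A = ∅)]
  have hsum1 : ∑ c ∈ Cf.filter (fun c => c ∩ A = ∅),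
      #(((Aᶜ).powersetCard w).filter (fun s => w - #(c ∩ s) ≤ 1))
      = #(Cf.filter (fun c => c ∩ A = ∅)) * (1 + w * (n - w - k)) := by
    rw [Finset.sum_congr rfl, Finset.sum_const, smul_eq_mul]
    intro c hcmem
    obtain ⟨hcC, hce⟩ := mem_filter.mp hcmem
    have hcw : #c = w := hcard c ((hCf c).mp hcC)
    rw [hball c hcC, if_pos hce, filter_card_eq_zero A c hce, hcw]
    have hu : #(c ∪ A) = w + k := by
      have := card_union_add_card_inter c A
      rw [hce, hcw, hA] at this
      simpa using this
    have he2 : Fintype.card α - (w + k) = n - w - k := by omega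
    rw [card_compl, hu, he2]
  have hsum2 : ∑ c ∈ Cf.filter (fun c => ¬ c ∩ A = ∅),
      #(((Aᶜ).powersetCard w).filter (fun s => w - #(c ∩ s) ≤ 1))
      = #(Cf.filter (fun c => #(c ∩ A) = 1)) * (n - w - k + 1) := by
    rw [← Finset.sum_filter_add_sum_filter_not (Cf.filter (fun c => ¬ c ∩ A = ∅))
      (fun c => #(c ∩ A) = 1)]
    have he1 : (Cf.filter (fun c => ¬ c ∩ A = ∅)).filter (fun c => #(c ∩ A) = 1)
        = Cf.filter (fun c => #(c ∩ A) = 1) := by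
      rw [filter_filter]
      apply filter_congr
      intro c _
      constructor
      · rintro ⟨_, h⟩; exact h
      · intro h
        refine ⟨?_, h⟩
        intro he
        rw [he] at h
        simp at h
    have hz : ∑ c ∈ (Cf.filter (fun c => ¬ c ∩ A = ∅)).filter (fun c => ¬ #(c ∩ A) = 1),
        #(((Aᶜ).powersetCard w).filter (fun s => w - #(c ∩ s) ≤ 1)) = 0 := by
      apply Finset.sum_eq_zero
      intro c hcmem
      obtain ⟨hcm, hc1⟩ := mem_filter.mp hcmem
      obtain ⟨hcC, hce⟩ := mem_filter.mp hcm
      have h2 : 2 ≤ #(c ∩ A) := by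
        have : #(c ∩ A) ≠ 0 := fun h => hce (card_eq_zero.mp h)
        omega
      rw [hball c hcC, if_neg hce, filter_card_ge_two A c h2]
      simp
    rw [hz, he1, Nat.add_zero]
    rw [Finset.sum_congr rfl, Finset.sum_const, smul_eq_mul]
    intro c hcmem
    obtain ⟨hcC, hc1⟩ := mem_filter.mp hcmem
    have hcw : #c = w := hcard c ((hCf c).mp hcC)
    have hce : ¬ c ∩ A = ∅ := by
      intro he; rw [he] at hc1; simp at hc1
    rw [hball c hcC, if_neg hce, filter_card_eq_one A c hc1]
    have hu : #(c ∪ A) = w + k - 1 := by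
      have := card_union_add_card_inter c A
      rw [hc1, hcw, hA] at this
      omega
    rw [card_compl, hu, one_mul]
    omega
  rw [hsum1, hsum2]

lemma single_sum (Cf : Finset (Finset α)) (A : Finset α) :
    #(Cf.filter (fun c => #(c ∩ A) = 1)) = ∑ x ∈ A, #(Cf.filter (fun c => c ∩ A = {x})) := by
  have hrep : Cf.filter (fun c => #(c ∩ A) = 1)
      = A.biUnion (fun x => Cf.filter (fun c => c ∩ A = {x})) := by
    ext c
    simp only [mem_filter, mem_biUnion]
    constructor
    · rintro ⟨hcC, h1⟩
      obtain ⟨x, hx⟩ := card_eq_one.mp h1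
      have hxA : x ∈ A := (mem_inter.mp (hx ▸ mem_singleton_self x)).2
      exact ⟨x, hxA, hcC, hx⟩
    · rintro ⟨x, _, hcC, hx⟩
      exact ⟨hcC, by rw [hx, card_singleton]⟩
  rw [hrep]
  apply card_biUnion
  intro x hx y hy hxy
  rw [Function.onFun_apply, Finset.disjoint_left]
  rintro c hc1 hc2
  have h1 := (mem_filter.mp hc1).2
  have h2 := (mem_filter.mp hc2).2
  exact hxy (singleton_injective (h1 ▸ h2 ▸ rfl : ({x} : Finset α) = {y}))

lemma crux {w k : ℕ} (hw : 1 ≤ w) (hk1 : 1 ≤ k) (hk : k < w)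
    (hn : 2 * w ≤ Fintype.card α)
    (hEF : k * (Fintype.card α - w - k + 1) < 1 + w * (Fintype.card α - w - k))
    (C : Set (Finset α)) (hcard : ∀ c ∈ C, #c = w)
    (hC : ∀ s : Finset α, #s = w → ∃! c, c ∈ C ∧ w - #(c ∩ s) ≤ 1)
    (Cf : Finset (Finset α)) (hCf : ∀ c, c ∈ Cf ↔ c ∈ C)
    (A B : Finset α) (hA : #A = k) (hB : #B = k)
    (hQ : ∀ A' B' : Finset α, #A' = k - 1 → #B' = k - 1 →
      #(Cf.filter (fun c => c ∩ A' = ∅)) = #(Cf.filter (fun c => c ∩ B' = ∅))) :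
    #(Cf.filter (fun c => c ∩ A = ∅)) = #(Cf.filter (fun c => c ∩ B = ∅)) := by
  obtain ⟨x₀, hx₀⟩ := Finset.card_pos.mp (by omega : 0 < #A)
  set t := #(Cf.filter (fun c => c ∩ A.erase x₀ = ∅)) with ht
  set p := #(Cf.filter (fun c => c ∩ A = ∅)) with hp
  set q := #(Cf.filter (fun c => c ∩ B = ∅)) with hq
  have hpairA : ∀ x ∈ A, p + #(Cf.filter (fun c => c ∩ A = {x})) = t := by
    intro x hx
    have h1 := pair_lemma Cf A ∅ x hx (empty_subset _)
    rw [LawfulSingleton.insert_empty_eq] at h1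
    rw [hp, h1, ht]
    exact hQ _ _ (by rw [card_erase_of_mem hx, hA]) (by rw [card_erase_of_mem hx₀, hA])
  have hpairB : ∀ y ∈ B, q + #(Cf.filter (fun c => c ∩ B = {y})) = t := by
    intro y hy
    have h1 := pair_lemma Cf B ∅ y hy (empty_subset _)
    rw [LawfulSingleton.insert_empty_eq] at h1
    rw [hq, h1, ht]
    exact hQ _ _ (by rw [card_erase_of_mem hy, hB]) (by rw [card_erase_of_mem hx₀, hA])
  have hpt : p ≤ t := by
    have := hpairA x₀ hx₀; omega
  have hqt : q ≤ t := by
    obtain ⟨y₀, hy₀⟩ := Finset.card_pos.mp (by omega : 0 < #B)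
    have := hpairB y₀ hy₀; omega
  have hMA : #(Cf.filter (fun c => #(c ∩ A) = 1)) = k * (t - p) := by
    rw [single_sum]
    rw [Finset.sum_congr rfl (fun x hx => by have := hpairA x hx; omega : 
      ∀ x ∈ A, #(Cf.filter (fun c => c ∩ A = {x})) = t - p)]
    rw [Finset.sum_const, smul_eq_mul, hA]
  have hMB : #(Cf.filter (fun c => #(c ∩ B) = 1)) = k * (t - q) := by
    rw [single_sum]
    rw [Finset.sum_congr rfl (fun y hy => by have := hpairB y hy; omega : 
      ∀ y ∈ B, #(Cf.filter (fun c => c ∩ B = {y})) = t - q)]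
    rw [Finset.sum_const, smul_eq_mul, hB]
  have hmA := master_eq hw hk hn C hcard hC Cf hCf A hA
  have hmB := master_eq hw hk hn C hcard hC Cf hCf B hB
  rw [hMA, ← hp] at hmA
  rw [hMB, ← hq] at hmB
  -- now p * E + k*(t-p) * F = q * E + k*(t-q) * F
  set E := 1 + w * (Fintype.card α - w - k) with hE
  set F := Fintype.card α - w - k + 1 with hF
  have key : p * E + k * (t - p) * F = q * E + k * (t - q) * F := by omega
  have keyZ : ((p : ℤ) - q) * ((E : ℤ) - k * F) = 0 := by
    have h1 : ((t : ℤ) - p) = ((t - p : ℕ) : ℤ) := by omega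
    have h2 : ((t : ℤ) - q) = ((t - q : ℕ) : ℤ) := by omega
    have h3 : (p : ℤ) * E + k * (t - p) * F = q * E + k * (t - q) * F := by
      rw [h1, h2]; exact_mod_cast key
    linear_combination h3
  have hEFZ : (0 : ℤ) < (E : ℤ) - k * F := by
    have h1 : ((k : ℤ) * (F : ℤ)) < (E : ℤ) := by exact_mod_cast hEF
    linarith
  rcases mul_eq_zero.mp keyZ with h | h
  · omega
  · omega

end JohnsonAux

lemma regular_counts (w a : ℕ) (hw : 1 ≤ w) (C : Set (Finset (Fin (2*w+a))))
    (hcard : ∀ c ∈ C, #c = w)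
    (hC : ∀ s : Finset (Fin (2*w+a)), #s = w → ∃! c, c ∈ C ∧ w - #(c ∩ s) ≤ 1)
    (Cf : Finset (Finset (Fin (2*w+a)))) (hCf : ∀ c, c ∈ Cf ↔ c ∈ C) :
    ∀ k : ℕ, (k:ℝ) < Lwa w a →
    ∀ A B I J : Finset (Fin (2*w+a)), #A = k → #B = k → I ⊆ A → J ⊆ B → #I = #J →
      #(Cf.filter (fun c => c ∩ A = I)) = #(Cf.filter (fun c => c ∩ B = J)) := by
  intro k
  induction k using Nat.strong_induction_on with
  | _ k IH =>
  intro hkL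
  have hw' : (1:ℝ) ≤ w := by exact_mod_cast hw
  have hkw : k < w := by
    by_contra hge
    push_neg at hge
    have hwk : (w:ℝ) < Lwa w a := lt_of_le_of_lt (by exact_mod_cast hge) hkL
    have h := sigma_pos_real w a hw w hwk
    nlinarith [h]
  match k, hkL, hkw, IH with
  | 0, hkL, hkw, IH =>
    intro A B I J hA hB hIA hJB _
    have hA0 : A = ∅ := card_eq_zero.mp hA
    have hB0 : B = ∅ := card_eq_zero.mp hB
    subst hA0; subst hB0
    have hI0 : I = ∅ := subset_empty.mp hIA
    have hJ0 : J = ∅ := subset_empty.mp hJB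
    subst hI0; subst hJ0
    rfl
  | (k'+1), hkL, hkw, IH =>
    have hQ0 : ∀ A' B' : Finset (Fin (2*w+a)), #A' = k' → #B' = k' →
        #(Cf.filter (fun c => c ∩ A' = ∅)) = #(Cf.filter (fun c => c ∩ B' = ∅)) := by
      intro A' B' hA' hB'
      have hk'L : ((k':ℕ):ℝ) < Lwa w a := by
        refine lt_of_le_of_lt ?_ hkL
        push_cast
        linarith
      exact IH k' (Nat.lt_succ_self k') hk'L A' B' ∅ ∅ hA' hB' (empty_subset _) (empty_subset _) rfl
    have hEF : (k'+1) * (Fintype.card (Fin (2*w+a)) - w - (k'+1) + 1)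
        < 1 + w * (Fintype.card (Fin (2*w+a)) - w - (k'+1)) := by
      have hkR := sigma_pos_real w a hw (k'+1 : ℕ) hkL
      have hkZ : (0:ℤ) < ((k'+1:ℕ):ℤ)^2 - (2*(w:ℤ)+a+1)*((k'+1:ℕ):ℤ) + ((w:ℤ)*((w:ℤ)+a)+1) := by
        exact_mod_cast hkR
      rw [Fintype.card_fin]
      have hle : (k'+1) ≤ w + a := by omega
      have hc1 : 2*w+a-w-(k'+1) = w+a-(k'+1) := by omega
      rw [hc1]
      zify [hle]
      push_cast at hkZ
      nlinarith [hkZ]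
    have hn : 2 * w ≤ Fintype.card (Fin (2*w+a)) := by rw [Fintype.card_fin]; omega
    have inner : ∀ i, ∀ A B I J : Finset (Fin (2*w+a)), #A = k'+1 → #B = k'+1 →
        I ⊆ A → J ⊆ B → #I = i → #J = i →
        #(Cf.filter (fun c => c ∩ A = I)) = #(Cf.filter (fun c => c ∩ B = J)) := by
      intro i
      induction i using Nat.strong_induction_on with
      | _ i IH2 =>
      intro A B I J hA hB hIA hJB hI hJ
      match i, IH2, hI, hJ with
      | 0, IH2, hI, hJ =>
        have hI0 : I = ∅ := card_eq_zero.mp hI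
        have hJ0 : J = ∅ := card_eq_zero.mp hJ
        subst hI0; subst hJ0
        exact crux hw (Nat.le_add_left 1 k') hkw hn hEF C hcard hC Cf hCf A B hA hB
          (by simpa using hQ0)
      | (i'+1), IH2, hI, hJ =>
        obtain ⟨x, hx⟩ := Finset.card_pos.mp (by omega : 0 < #I)
        obtain ⟨y, hy⟩ := Finset.card_pos.mp (by omega : 0 < #J)
        have e1 := pair_lemma Cf A (I.erase x) x (hIA hx)
          (fun u hu => mem_erase.mpr ⟨(mem_erase.mp hu).1, hIA (mem_erase.mp hu).2⟩)
        rw [insert_erase hx] at e1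
        have e2 := pair_lemma Cf B (J.erase y) y (hJB hy)
          (fun u hu => mem_erase.mpr ⟨(mem_erase.mp hu).1, hJB (mem_erase.mp hu).2⟩)
        rw [insert_erase hy] at e2
        have hk'L : ((k':ℕ):ℝ) < Lwa w a := by
          refine lt_of_le_of_lt ?_ hkL
          push_cast
          linarith
        have hR : #(Cf.filter (fun c => c ∩ A.erase x = I.erase x))
            = #(Cf.filter (fun c => c ∩ B.erase y = J.erase y)) := by
          apply IH k' (Nat.lt_succ_self k') hk'L
          · rw [card_erase_of_mem (hIA hx), hA]; omega
          · rw [card_erase_of_mem (hJB hy), hB]; omega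
          · exact fun u hu => mem_erase.mpr ⟨(mem_erase.mp hu).1, hIA (mem_erase.mp hu).2⟩
          · exact fun u hu => mem_erase.mpr ⟨(mem_erase.mp hu).1, hJB (mem_erase.mp hu).2⟩
          · rw [card_erase_of_mem hx, card_erase_of_mem hy, hI, hJ]
        have hL : #(Cf.filter (fun c => c ∩ A = I.erase x))
            = #(Cf.filter (fun c => c ∩ B = J.erase y)) := by
          apply IH2 i' (Nat.lt_succ_self i') A B _ _ hA hB
            ((erase_subset x I).trans hIA) ((erase_subset y J).trans hJB)
            (by rw [card_erase_of_mem hx, hI]; omega)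
            (by rw [card_erase_of_mem hy, hJ]; omega)
        omega
    exact fun A B I J hA hB hIA hJB hIJ => inner #I A B I J hA hB hIA hJB rfl hIJ.symm


lemma ncard_bridge {α : Type*} (C : Set α) (Cf : Finset α) (hCf : ∀ c, c ∈ Cf ↔ c ∈ C)
    (P : α → Prop) [DecidablePred P] :
    {c ∈ C | P c}.ncard = #(Cf.filter P) := by
  rw [← Set.ncard_coe_finset]
  congr 1
  ext c
  simp only [Set.mem_setOf_eq, Finset.coe_filter, hCf c]

/-- A nontrivial 1-perfect code in `J(2w+a, w)` is `k`-regular for every positive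
integer `k < L(w,a)`. -/
theorem stmt_2 (w a : ℕ) (hw : 1 ≤ w) (C : Set (Finset (Fin (2 * w + a))))
    (hperf : IsOnePerfect (2 * w + a) w C) (hnontriv : C.Nontrivial) :
    ∀ k : ℕ, 0 < k → (k : ℝ) < Lwa w a → IsKRegularCode (2 * w + a) k C := by
  classical
  intro k hk0 hkL
  obtain ⟨hcode, hperf2⟩ := hperf
  have hfin : C.Finite := Set.toFinite C
  set Cf := hfin.toFinset with hCfdef
  have hCf : ∀ c, c ∈ Cf ↔ c ∈ C := fun c => Set.Finite.mem_toFinset hfin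
  have hreg := regular_counts w a hw C hcode hperf2 Cf hCf
  have hw' : (1:ℝ) ≤ w := by exact_mod_cast hw
  have hkw : k < w := by
    by_contra hge
    push_neg at hge
    have hwk : (w:ℝ) < Lwa w a := lt_of_le_of_lt (by exact_mod_cast hge) hkL
    have h := sigma_pos_real w a hw w hwk
    nlinarith [h]
  have hsplit : ∀ (A : Finset (Fin (2*w+a))) (i : ℕ),
      #(Cf.filter (fun c => #(c ∩ A) = i))
        = ∑ I ∈ A.powersetCard i, #(Cf.filter (fun c => c ∩ A = I)) := by
    intro A i
    have hrep : Cf.filter (fun c => #(c ∩ A) = i)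
        = (A.powersetCard i).biUnion (fun I => Cf.filter (fun c => c ∩ A = I)) := by
      ext c
      simp only [mem_filter, mem_biUnion, mem_powersetCard]
      constructor
      · rintro ⟨hc, hci⟩
        exact ⟨c ∩ A, ⟨inter_subset_right, hci⟩, hc, rfl⟩
      · rintro ⟨I, ⟨_, hIc⟩, hc, hcI⟩
        exact ⟨hc, by rw [hcI, hIc]⟩
    rw [hrep]
    apply card_biUnion
    intro I hI I' hI' hne
    rw [Function.onFun_apply, Finset.disjoint_left]
    rintro c hc1 hc2
    exact hne ((mem_filter.mp hc1).2 ▸ (mem_filter.mp hc2).2 ▸ rfl : I = I')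
  constructor
  · -- part (1)
    have hex : ∀ i : ℕ, ∃ m : ℕ, ∀ A : Finset (Fin (2*w+a)), #A = k → i ≤ k →
        {c ∈ C | #(c ∩ A) = i}.ncard = m := by
      intro i
      by_cases hik : i ≤ k
      · obtain ⟨A₀, _, hA₀⟩ := Finset.exists_subset_card_eq
          (show k ≤ #(Finset.univ : Finset (Fin (2*w+a))) by
            rw [card_univ, Fintype.card_fin]; omega)
        obtain ⟨I₀, hI₀A, hI₀⟩ := Finset.exists_subset_card_eq (show i ≤ #A₀ by omega)
        refine ⟨(k.choose i) * #(Cf.filter (fun c => c ∩ A₀ = I₀)), ?_⟩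
        intro A hA _
        rw [ncard_bridge C Cf hCf, hsplit A i]
        rw [Finset.sum_congr rfl (fun I hI => hreg k hkL A A₀ I I₀ hA hA₀
          (mem_powersetCard.mp hI).1 hI₀A (by rw [(mem_powersetCard.mp hI).2, hI₀]))]
        rw [sum_const, smul_eq_mul, card_powersetCard, hA]
      · exact ⟨0, fun A hA hik' => absurd hik' hik⟩
    choose αf hαf using hex
    exact ⟨αf, fun A hA i hik => hαf i A hA hik⟩
  · -- part (2)
    intro A hA
    have hex : ∀ i : ℕ, ∃ m : ℕ, ∀ I : Finset (Fin (2*w+a)), I ⊆ A → #I = i →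
        {c ∈ C | c ∩ A = I}.ncard = m := by
      intro i
      by_cases hik : i ≤ k
      · obtain ⟨I₀, hI₀A, hI₀⟩ := Finset.exists_subset_card_eq (show i ≤ #A by omega)
        refine ⟨#(Cf.filter (fun c => c ∩ A = I₀)), fun I hIA hIi => ?_⟩
        rw [ncard_bridge C Cf hCf]
        exact hreg k hkL A A I I₀ hA hA hIA hI₀A (by rw [hIi, hI₀])
      · refine ⟨0, fun I hIA hIi => ?_⟩
        have := card_le_card hIA
        omega
    choose βf hβf using hex
    exact ⟨βf, fun I hIA => hβf _ I hIA rfl⟩
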